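/- Let f : [0,∞) → ℝ be continuous and define u : [0,∞) → ℝ by u(s) = tanh(s) · ∫₀^s tanh(t)⁻² (∫₀^t tanh(r) f(r) dr) dt for s > 0 and u(0) = 0 (the inner expression extends continuously to t = 0). Then u is twice continuously differentiable on (0,∞), u(0) = 0, and u''(s) + 2 cosh⁻²(s) u(s) = f(s) for all s > 0; that is, variation of parameters with the kernel element tanh(s) inverts the operator L̃f = f'' + 2cosh⁻²·f while preserving the zero Dirichlet condition at s = 0. -/

import Mathlib

open Real MeasureTheory intervalIntegral

private lemma tanh_hasDerivAt (x : ℝ) :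
    HasDerivAt Real.tanh ((Real.cosh x ^ 2)⁻¹) x := by
  have h := (Real.hasDerivAt_sinh x).div (Real.hasDerivAt_cosh x) (Real.cosh_pos x).ne'
  have he : Real.tanh = fun y => Real.sinh y / Real.cosh y :=
    funext fun y => Real.tanh_eq_sinh_div_cosh y
  rw [he]
  refine HasDerivAt.congr_deriv h ?_
  have h1 : Real.cosh x * Real.cosh x - Real.sinh x * Real.sinh x = 1 := by
    have := Real.cosh_sq_sub_sinh_sq x; ring_nf; ring_nf at this; linarith
  rw [h1, one_div]

private lemma continuous_tanh' : Continuous Real.tanh := by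
  have he : Real.tanh = fun y => Real.sinh y / Real.cosh y :=
    funext fun y => Real.tanh_eq_sinh_div_cosh y
  rw [he]
  exact Real.continuous_sinh.div Real.continuous_cosh fun x => (Real.cosh_pos x).ne'

private lemma tanh_pos' {x : ℝ} (hx : 0 < x) : 0 < Real.tanh x := by
  rw [Real.tanh_eq_sinh_div_cosh]
  exact div_pos (Real.sinh_pos_iff.mpr hx) (Real.cosh_pos x)

private lemma tanh_mono' {r t : ℝ} (hr : 0 ≤ r) (hrt : r ≤ t) :
    Real.tanh r ≤ Real.tanh t := by
  rw [Real.tanh_eq_sinh_div_cosh, Real.tanh_eq_sinh_div_cosh,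
    div_le_div_iff₀ (Real.cosh_pos r) (Real.cosh_pos t)]
  have h1 : 0 ≤ Real.sinh (t - r) := Real.sinh_nonneg_iff.mpr (by linarith)
  have h2 := Real.sinh_sub t r
  nlinarith

/-- Variation of parameters with the kernel element `tanh` inverts the operator
`L̃ f = f'' + 2 cosh⁻² · f` while preserving the zero Dirichlet condition at `s = 0`. -/
theorem variation_of_parameters_inverts_Ltilde
    (f : ℝ → ℝ) (hf : ContinuousOn f (Set.Ici 0)) :
    let u : ℝ → ℝ := fun s =>
      Real.tanh s *
        ∫ t in (0:ℝ)..s, ((Real.tanh t)^2)⁻¹ * ∫ r in (0:ℝ)..t, Real.tanh r * f r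
    ContDiffOn ℝ 2 u (Set.Ioi 0) ∧
    u 0 = 0 ∧
    ∀ s > (0:ℝ), deriv (deriv u) s + 2 * ((Real.cosh s)^2)⁻¹ * u s = f s := by
  intro u
  set g : ℝ → ℝ := fun t => ∫ r in (0:ℝ)..t, Real.tanh r * f r with hgdef
  set w : ℝ → ℝ := fun t => ((Real.tanh t)^2)⁻¹ * g t with hwdef
  set v : ℝ → ℝ := fun s => ∫ t in (0:ℝ)..s, w t with hvdef
  have huv : u = fun s => Real.tanh s * v s := rfl
  -- integrability of tanh * f
  have hInt1 : ∀ t : ℝ, 0 ≤ t →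
      IntervalIntegrable (fun r => Real.tanh r * f r) volume 0 t := by
    intro t ht
    apply ContinuousOn.intervalIntegrable
    refine continuous_tanh'.continuousOn.mul (hf.mono ?_)
    rw [Set.uIcc_of_le ht]
    exact fun x hx => hx.1
  have hcont_tf : ContinuousOn (fun r => Real.tanh r * f r) (Set.Ioi 0) :=
    continuous_tanh'.continuousOn.mul (hf.mono fun x hx => Set.mem_Ici.mpr (le_of_lt hx))
  have hg_deriv : ∀ t ∈ Set.Ioi (0:ℝ), HasDerivAt g (Real.tanh t * f t) t := by
    intro t ht
    refine intervalIntegral.integral_hasDerivAt_right (hInt1 t (le_of_lt ht))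
      (hcont_tf.stronglyMeasurableAtFilter isOpen_Ioi t ht) ?_
    exact hcont_tf.continuousAt (isOpen_Ioi.mem_nhds ht)
  have hw_cont : ContinuousOn w (Set.Ioi 0) := by
    refine ContinuousOn.mul (ContinuousOn.inv₀ (continuous_tanh'.continuousOn.pow 2) ?_) ?_
    · intro x hx; exact pow_ne_zero 2 (tanh_pos' hx).ne'
    · exact fun x hx => ((hg_deriv x hx).continuousAt).continuousWithinAt
  -- boundedness of w near 0
  have hwInt : ∀ b : ℝ, 0 < b → IntervalIntegrable w volume 0 b := by
    intro b hb
    obtain ⟨C, hC⟩ := (isCompact_Icc (a := (0:ℝ)) (b := b)).exists_bound_of_continuousOn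
      (hf.mono Set.Icc_subset_Ici_self)
    set M : ℝ := max C 0 with hM
    have hM0 : 0 ≤ M := le_max_right _ _
    have hbound : ∀ t ∈ Set.Ioc (0:ℝ) b, ‖w t‖ ≤ M * Real.cosh b := by
      intro t ht
      have ht0 := ht.1
      have hT : 0 < Real.tanh t := tanh_pos' ht0
      have hgb : |g t| ≤ M * Real.tanh t * t := by
        have hb1 : ∀ r ∈ Set.uIoc (0:ℝ) t, ‖Real.tanh r * f r‖ ≤ M * Real.tanh t := by
          intro r hr
          rw [Set.uIoc_of_le ht0.le] at hr
          have h1 : 0 ≤ Real.tanh r := by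
            rw [Real.tanh_eq_sinh_div_cosh]
            exact div_nonneg (Real.sinh_nonneg_iff.mpr hr.1.le) (Real.cosh_pos r).le
          have h2 : Real.tanh r ≤ Real.tanh t := tanh_mono' hr.1.le hr.2
          have h3 : |f r| ≤ M :=
            le_trans (hC r ⟨hr.1.le, hr.2.trans ht.2⟩) (le_max_left _ _)
          rw [Real.norm_eq_abs, abs_mul, abs_of_nonneg h1]
          have := abs_nonneg (f r)
          nlinarith
        have := intervalIntegral.norm_integral_le_of_norm_le_const hb1
        simpa [abs_of_pos ht0, Real.norm_eq_abs] using this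
      have hsinh : t ≤ Real.sinh t := (Real.self_le_sinh_iff.mpr ht0.le)
      have hts : Real.tanh t * Real.cosh t = Real.sinh t := by
        rw [Real.tanh_eq_sinh_div_cosh]
        field_simp
      have hcosh : Real.cosh t ≤ Real.cosh b := by
        rw [Real.cosh_le_cosh, abs_of_pos ht0, abs_of_pos hb]; exact ht.2
      rw [Real.norm_eq_abs, hwdef]
      simp only
      rw [abs_mul, abs_inv, abs_pow, abs_of_pos hT]
      rw [inv_mul_le_iff₀ (by positivity)]
      have h4 : M * Real.tanh t * t ≤ M * Real.tanh t * (Real.tanh t * Real.cosh b) := by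
        have h5 : t ≤ Real.tanh t * Real.cosh b := by nlinarith [Real.cosh_pos t]
        exact mul_le_mul_of_nonneg_left h5 (by positivity)
      nlinarith
    rw [intervalIntegrable_iff, Set.uIoc_of_le hb.le]
    have hmeas : AEStronglyMeasurable w (volume.restrict (Set.Ioc 0 b)) :=
      (hw_cont.mono Set.Ioc_subset_Ioi_self).aestronglyMeasurable measurableSet_Ioc
    refine Integrable.mono' (g := fun _ => M * Real.cosh b) ?_ hmeas ?_
    · exact integrableOn_const measure_Ioc_lt_top.ne
    · exact (ae_restrict_iff' measurableSet_Ioc).mpr (ae_of_all _ hbound)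
  -- first derivative
  have hv_deriv : ∀ s ∈ Set.Ioi (0:ℝ), HasDerivAt v (w s) s := by
    intro s hs
    exact intervalIntegral.integral_hasDerivAt_right (hwInt s hs)
      (hw_cont.stronglyMeasurableAtFilter isOpen_Ioi s hs)
      (hw_cont.continuousAt (isOpen_Ioi.mem_nhds hs))
  have hu_deriv : ∀ s ∈ Set.Ioi (0:ℝ), HasDerivAt (fun s => Real.tanh s * v s)
      ((Real.cosh s ^ 2)⁻¹ * v s + Real.tanh s * w s) s := by
    intro s hs
    exact (tanh_hasDerivAt s).mul (hv_deriv s hs)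
  -- second derivative
  have hdd : ∀ s ∈ Set.Ioi (0:ℝ), HasDerivAt (deriv (fun s => Real.tanh s * v s))
      (f s - 2 * ((Real.cosh s)^2)⁻¹ * (Real.tanh s * v s)) s := by
    intro s hs
    have hs0 : (0:ℝ) < s := hs
    have hT : Real.tanh s ≠ 0 := (tanh_pos' hs0).ne'
    have hCo : Real.cosh s ≠ 0 := (Real.cosh_pos s).ne'
    have hw_d : HasDerivAt w
        (-(2 * Real.tanh s ^ 1 * (Real.cosh s ^ 2)⁻¹) / (Real.tanh s ^ 2) ^ 2 * g s
          + (Real.tanh s ^ 2)⁻¹ * (Real.tanh s * f s)) s :=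
      ((((tanh_hasDerivAt s).pow 2).inv (pow_ne_zero 2 hT)).mul (hg_deriv s hs))
    have hA : HasDerivAt (fun x => (Real.cosh x ^ 2)⁻¹ * v x)
        (-(2 * Real.cosh s ^ 1 * Real.sinh s) / (Real.cosh s ^ 2) ^ 2 * v s
          + (Real.cosh s ^ 2)⁻¹ * w s) s :=
      (((Real.hasDerivAt_cosh s).pow 2).inv (pow_ne_zero 2 hCo)).mul (hv_deriv s hs)
    have hB : HasDerivAt (fun x => Real.tanh x * w x)
        ((Real.cosh s ^ 2)⁻¹ * w s + Real.tanh s *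
          (-(2 * Real.tanh s ^ 1 * (Real.cosh s ^ 2)⁻¹) / (Real.tanh s ^ 2) ^ 2 * g s
            + (Real.tanh s ^ 2)⁻¹ * (Real.tanh s * f s))) s :=
      (tanh_hasDerivAt s).mul hw_d
    have hφ := hA.add hB
    have hkey : HasDerivAt (fun x => (Real.cosh x ^ 2)⁻¹ * v x + Real.tanh x * w x)
        (f s - 2 * ((Real.cosh s)^2)⁻¹ * (Real.tanh s * v s)) s := by
      refine HasDerivAt.congr_deriv hφ ?_
      rw [hwdef]
      simp only [Real.tanh_eq_sinh_div_cosh]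
      have hS : Real.sinh s ≠ 0 := (Real.sinh_pos_iff.mpr hs0).ne'
      field_simp
      ring
    refine hkey.congr_of_eventuallyEq ?_
    filter_upwards [isOpen_Ioi.mem_nhds hs] with x hx
    exact (hu_deriv x hx).deriv
  have hv_cont : ContinuousOn v (Set.Ioi 0) :=
    fun x hx => ((hv_deriv x hx).continuousAt).continuousWithinAt
  have hdd_cont : ContinuousOn (deriv (deriv (fun s => Real.tanh s * v s))) (Set.Ioi 0) := by
    apply ContinuousOn.congr (f := fun s =>
      f s - 2 * ((Real.cosh s)^2)⁻¹ * (Real.tanh s * v s))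
    · refine ContinuousOn.sub (hf.mono fun x hx => Set.mem_Ici.mpr (le_of_lt hx)) ?_
      refine ContinuousOn.mul (ContinuousOn.mul continuousOn_const
        (ContinuousOn.inv₀ ((Real.continuous_cosh.continuousOn).pow 2)
          fun x _ => pow_ne_zero 2 (Real.cosh_pos x).ne')) ?_
      exact continuous_tanh'.continuousOn.mul hv_cont
    · exact fun x hx => (hdd x hx).deriv
  rw [huv]
  refine ⟨?_, ?_, ?_⟩
  · rw [show (2 : WithTop ℕ∞) = 1 + 1 from rfl,
      contDiffOn_succ_iff_deriv_of_isOpen isOpen_Ioi]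
    refine ⟨fun x hx => ((hu_deriv x hx).differentiableAt).differentiableWithinAt,
      by simp, ?_⟩
    rw [show (1 : WithTop ℕ∞) = 0 + 1 from rfl,
      contDiffOn_succ_iff_deriv_of_isOpen isOpen_Ioi]
    refine ⟨fun x hx => ((hdd x hx).differentiableAt).differentiableWithinAt,
      by simp, ?_⟩
    rw [contDiffOn_zero]
    exact hdd_cont
  · simp
  · intro s hs
    rw [(hdd s hs).deriv]
    ring
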